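/- For every natural number m ≥ 1 and every real N > 0, the integral over the complex plane (1/(π·N·m!)) · ∫_ℂ ‖z‖^{2(m−1)} · (m − ‖z‖²)² · e^{−((N+1)/N)·‖z‖²} dz (with respect to Lebesgue measure on ℂ) equals (N/(N+1))^m · (m + N²)/(N·(N+1)²). -/

import Mathlib

open MeasureTheory Real Set

/-- Odd-moment Gaussian integral: `∫_{0}^{∞} r^{2j+1} e^{-b r²} dr = j! / (2 b^{j+1})`. -/
lemma aux_intI (j : ℕ) {b : ℝ} (hb : 0 < b) :
    ∫ r in Ioi (0:ℝ), r ^ (2*j+1) * Real.exp (-b * r^2)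
      = j.factorial / (2 * b ^ (j+1)) := by
  have hq : (-1:ℝ) < ((2*j+1 : ℕ) : ℝ) :=
    lt_of_lt_of_le neg_one_lt_zero (by positivity)
  have h := integral_rpow_mul_exp_neg_mul_rpow (p := 2) (q := ((2*j+1 : ℕ) : ℝ))
    (by norm_num) hq hb
  have hL : ∫ x in Ioi (0:ℝ), x ^ (((2*j+1 : ℕ) : ℝ)) * Real.exp (-b * x ^ (2:ℝ))
      = ∫ r in Ioi (0:ℝ), r ^ (2*j+1) * Real.exp (-b * r^2) := by
    refine setIntegral_congr_fun measurableSet_Ioi (fun x hx => ?_)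
    rw [Real.rpow_natCast, Real.rpow_two]
  rw [hL] at h
  rw [h, show (-(((2*j+1 : ℕ) : ℝ) + 1) / 2) = -((j+1 : ℕ) : ℝ) by push_cast; ring,
    show ((((2*j+1 : ℕ) : ℝ) + 1) / 2) = ((j : ℝ) + 1) by push_cast; ring,
    Real.rpow_neg hb.le, Real.rpow_natCast, Real.Gamma_nat_eq_factorial]
  have hbne : b ^ (j+1) ≠ 0 := by positivity
  field_simp

lemma aux_intgI (j : ℕ) {b : ℝ} (hb : 0 < b) :
    IntegrableOn (fun r : ℝ => r ^ (2*j+1) * Real.exp (-b * r^2)) (Ioi 0) := by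
  have h := integrableOn_rpow_mul_exp_neg_mul_sq hb
    (s := ((2*j+1 : ℕ) : ℝ)) (lt_of_lt_of_le neg_one_lt_zero (by positivity))
  refine h.congr_fun (fun x hx => ?_) measurableSet_Ioi
  beta_reduce
  rw [Real.rpow_natCast]

/-- for every m ≥ 1 and N > 0,
(1/(πN·m!)) ∫_ℂ ‖z‖^{2(m−1)} (m − ‖z‖²)² e^{−((N+1)/N)‖z‖²} dz
  = (N/(N+1))^m (m + N²)/(N(N+1)²). -/
theorem gaussian_noise_pm (m : ℕ) (hm : 1 ≤ m) (N : ℝ) (hN : 0 < N) :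
    (1 / (Real.pi * N * m.factorial)) *
        ∫ z : ℂ, ‖z‖ ^ (2 * (m - 1)) * ((m : ℝ) - ‖z‖ ^ 2) ^ 2 *
          Real.exp (-((N + 1) / N) * ‖z‖ ^ 2) =
      (N / (N + 1)) ^ m * ((m : ℝ) + N ^ 2) / (N * (N + 1) ^ 2) := by
  obtain ⟨k, rfl⟩ : ∃ k, m = k + 1 := ⟨m - 1, (Nat.succ_pred_eq_of_pos hm).symm⟩
  have hN1 : (0:ℝ) < N + 1 := by linarith
  set c : ℝ := (N + 1) / N with hc_def
  have hc : 0 < c := by positivity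
  have hEint : ∀ j : ℕ,
      IntegrableOn (fun r : ℝ => r ^ (2*j+1) * Real.exp (-c * r^2)) (Ioi 0) :=
    fun j => aux_intgI j hc
  -- polar coordinates
  have hvol : (volume (Metric.ball (0:ℂ) 1)).toReal = Real.pi := by
    simp [Complex.volume_ball]
  have hpolar : (∫ z : ℂ, ‖z‖ ^ (2 * (k + 1 - 1)) * (((k+1:ℕ):ℝ) - ‖z‖ ^ 2) ^ 2 *
        Real.exp (-c * ‖z‖ ^ 2))
      = 2 * Real.pi * ∫ r in Ioi (0:ℝ),
          r ^ 1 * (r ^ (2*k) * (((k+1:ℕ):ℝ) - r ^ 2) ^ 2 * Real.exp (-c * r ^ 2)) := by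
    have h2 := integral_fun_norm_addHaar (volume : Measure ℂ)
      (fun r : ℝ => r ^ (2*k) * (((k+1:ℕ):ℝ) - r ^ 2) ^ 2 * Real.exp (-c * r ^ 2))
    simp only [Complex.finrank_real_complex] at h2
    rw [measureReal_def, hvol] at h2
    rw [show (k + 1 - 1) = k from rfl, h2]
    simp only [smul_eq_mul, nsmul_eq_mul, Nat.cast_ofNat]
    ring
  -- evaluate the radial integral
  have hinner : (∫ r in Ioi (0:ℝ),
        r ^ 1 * (r ^ (2*k) * (((k+1:ℕ):ℝ) - r ^ 2) ^ 2 * Real.exp (-c * r ^ 2)))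
      = ((k+1:ℕ):ℝ)^2 * ((k.factorial : ℝ) / (2 * c ^ (k+1)))
        - 2*((k+1:ℕ):ℝ) * (((k+1).factorial : ℝ) / (2 * c ^ (k+2)))
        + (((k+2).factorial : ℝ) / (2 * c ^ (k+3))) := by
    rw [setIntegral_congr_fun (g := fun r : ℝ =>
        ((k+1:ℕ):ℝ)^2 * (r ^ (2*k+1) * Real.exp (-c * r^2))
        - 2*((k+1:ℕ):ℝ) * (r ^ (2*(k+1)+1) * Real.exp (-c * r^2))
        + (r ^ (2*(k+2)+1) * Real.exp (-c * r^2)))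
      measurableSet_Ioi (fun r _ => by ring)]
    have h1a : Integrable (fun r : ℝ =>
        ((k+1:ℕ):ℝ)^2 * (r ^ (2*k+1) * Real.exp (-c * r^2)))
        (volume.restrict (Ioi 0)) := (hEint k).const_mul _
    have h1b : Integrable (fun r : ℝ =>
        2*((k+1:ℕ):ℝ) * (r ^ (2*(k+1)+1) * Real.exp (-c * r^2)))
        (volume.restrict (Ioi 0)) := (hEint (k+1)).const_mul _
    have h1 : Integrable (fun r : ℝ =>
        ((k+1:ℕ):ℝ)^2 * (r ^ (2*k+1) * Real.exp (-c * r^2))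
          - 2*((k+1:ℕ):ℝ) * (r ^ (2*(k+1)+1) * Real.exp (-c * r^2)))
        (volume.restrict (Ioi 0)) := h1a.sub h1b
    rw [integral_add h1 (hEint (k+2)),
      integral_sub h1a h1b,
      integral_const_mul, integral_const_mul,
      aux_intI k hc, aux_intI (k+1) hc, aux_intI (k+2) hc]
  rw [hpolar, hinner]
  -- algebra
  have hfact1 : (((k+1).factorial : ℕ) : ℝ) = ((k:ℝ)+1) * (k.factorial : ℝ) := by
    rw [Nat.factorial_succ]; push_cast; ring
  have hfact2 : (((k+2).factorial : ℕ) : ℝ) = ((k:ℝ)+2) * (((k+1).factorial : ℕ) : ℝ) := by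
    rw [Nat.factorial_succ (k+1)]; push_cast; ring
  have hF : (0:ℝ) < (k.factorial : ℝ) := by exact_mod_cast k.factorial_pos
  have hpow1 : c ^ (k+2) = c ^ (k+1) * c := by ring
  have hpow2 : c ^ (k+3) = c ^ (k+1) * c^2 := by ring
  have hinv : (N/(N+1)) ^ (k+1) = (c ^ (k+1))⁻¹ := by
    rw [← inv_pow]
    congr 1
    rw [hc_def]
    field_simp
  have hcpow : c ^ (k+1) = (N+1)^(k+1) / N^(k+1) := by
    rw [hc_def, div_pow]
  rw [hfact2, hfact1, hpow1, hpow2, hinv, hcpow, hc_def]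
  have hX : ((N+1):ℝ)^(k+1) ≠ 0 := by positivity
  have hY : (N:ℝ)^(k+1) ≠ 0 := by positivity
  have hπ : Real.pi ≠ 0 := Real.pi_ne_zero
  push_cast
  field_simp
  ring
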